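/- If a sequence (θ_k) in Θ satisfies L(θ_k, λ_k, α_k) ≤ g(λ_k, α_k) + ε_k with ε_k → 0, the dual values satisfy g(λ_k, α_k − δ) → sup(D) < ∞ for some fixed δ > 0, and ℓ₀ is bounded below, then limsup_k max{0, ℓᵢ(θ_k)} = 0 for each i = 1,…,m; i.e., the primal iterates are asymptotically feasible. In particular, the key inequality δ·Σᵢ max{0, ℓᵢ(θ_k)}² ≤ L(θ_k, λ_k, α_k) − L(θ_k, λ_k, α_k − δ) ≤ g(λ_k, α_k) + ε_k − g(λ_k, α_k − δ) holds for all k. -/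

import Mathlib

open scoped BigOperators
open Filter

noncomputable def Psi (x y : ℝ) : ℝ := ((max 0 (2 * x + y)) ^ 2 - y ^ 2) / 4

/-- Augmented Lagrangian. -/
noncomputable def augL {Θ : Type*} {m : ℕ} (ℓ₀ : Θ → ℝ) (ℓ : Fin m → Θ → ℝ)
    (θ : Θ) (lam : Fin m → ℝ) (α : ℝ) : ℝ :=
  ℓ₀ θ + α * ∑ i, Psi (ℓ i θ) (lam i / α)

/-- Augmented dual function, valued in `EReal`. -/
noncomputable def augG {Θ : Type*} {m : ℕ} (ℓ₀ : Θ → ℝ) (ℓ : Fin m → Θ → ℝ)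
    (lam : Fin m → ℝ) (α : ℝ) : EReal :=
  ⨅ θ : Θ, ((augL ℓ₀ ℓ θ lam α : ℝ) : EReal)

lemma psi_key (x s : ℝ) (hs : 0 ≤ s) {a b : ℝ} (hb : 0 < b) (hab : b ≤ a) :
    (a - b) * (max 0 x)^2 ≤ a * Psi x (s/a) - b * Psi x (s/b) := by
  have ha : 0 < a := hb.trans_le hab
  rcases le_or_gt 0 x with hx | hx
  · have h1 : max 0 (2*x + s/a) = 2*x + s/a := max_eq_right (by positivity)
    have h2 : max 0 (2*x + s/b) = 2*x + s/b := max_eq_right (by positivity)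
    have : a * Psi x (s/a) - b * Psi x (s/b) = (a-b)*x^2 := by
      unfold Psi; rw [h1, h2]; field_simp; ring
    rw [max_eq_right hx, this]
  · rw [max_eq_left hx.le]
    have key2 : ∀ t : ℝ, 0 < t → 2*t*x + s ≤ 0 → t * Psi x (s/t) = -s^2/(4*t) := by
      intro t ht hts
      have hmax : max 0 (2*x + s/t) = 0 := max_eq_left (by
        have : 2*x + s/t = (2*t*x+s)/t := by field_simp
        rw [this]; exact div_nonpos_of_nonpos_of_nonneg hts ht.le)
      unfold Psi; rw [hmax]; field_simp; ring
    have key3 : ∀ t : ℝ, 0 < t → 0 ≤ 2*t*x + s → t * Psi x (s/t) = t*x^2 + x*s := by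
      intro t ht hts
      have hmax : max 0 (2*x + s/t) = 2*x + s/t := max_eq_right (by
        have : 2*x + s/t = (2*t*x+s)/t := by field_simp
        rw [this]; positivity)
      unfold Psi; rw [hmax]; field_simp; ring
    rcases le_or_gt (2*a*x + s) 0 with hA | hA
    · rcases le_or_gt (2*b*x + s) 0 with hB | hB
      · rw [key2 a ha hA, key2 b hb hB]
        have h4 : s^2/(4*a) ≤ s^2/(4*b) := by
          apply div_le_div_of_nonneg_left (by positivity) (by positivity) (by linarith)
        simp only [neg_div]; nlinarith [h4]
      · rw [key2 a ha hA, key3 b hb hB.le]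
        have h5 : -(2*a*x+s) * (2*b*x+s) ≥ 0 := mul_nonneg (by linarith) hB.le
        have h6 : s * (a - b) * (-x) ≥ 0 :=
          mul_nonneg (mul_nonneg hs (by linarith)) (by linarith)
        have goal2 : b*x^2 + x*s ≤ -s^2/(4*a) := by
          rw [le_div_iff₀ (by positivity : (0:ℝ) < 4*a)]; nlinarith
        nlinarith [goal2]
    · have hB : 0 ≤ 2*b*x + s := by nlinarith
      rw [key3 a ha hA.le, key3 b hb hB]
      nlinarith

/-- Asymptotic feasibility of near-optimal primal iterates of the augmented dual ascent. -/
theorem asymptotic_feasibility {Θ : Type*} {m : ℕ}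
    (ℓ₀ : Θ → ℝ) (ℓ : Fin m → Θ → ℝ) (c : ℝ) (hc : ∀ θ, c ≤ ℓ₀ θ)
    (δ : ℝ) (hδ : 0 < δ)
    (lam : ℕ → Fin m → ℝ) (hlam : ∀ k i, 0 ≤ lam k i)
    (α : ℕ → ℝ) (hα : ∀ k, δ < α k)
    (θseq : ℕ → Θ) (ε : ℕ → ℝ) (hε0 : ∀ k, 0 ≤ ε k)
    (hεlim : Tendsto ε atTop (nhds 0))
    (supD : EReal) (hsupD : supD = ⨆ l : Fin m → ℝ, ⨆ a : ℝ, ⨆ _ : 0 < a, augG ℓ₀ ℓ l a)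
    (hsupD_fin : supD ≠ ⊤)
    (happrox : ∀ k, ((augL ℓ₀ ℓ (θseq k) (lam k) (α k) : ℝ) : EReal)
        ≤ augG ℓ₀ ℓ (lam k) (α k) + ((ε k : ℝ) : EReal))
    (htend : Tendsto (fun k => augG ℓ₀ ℓ (lam k) (α k - δ)) atTop (nhds supD)) :
    (∀ i, Filter.limsup (fun k => max 0 (ℓ i (θseq k))) atTop = 0) ∧
      ∀ k,
        δ * ∑ i, (max 0 (ℓ i (θseq k))) ^ 2
            ≤ augL ℓ₀ ℓ (θseq k) (lam k) (α k) - augL ℓ₀ ℓ (θseq k) (lam k) (α k - δ) ∧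
        ((augL ℓ₀ ℓ (θseq k) (lam k) (α k)
            - augL ℓ₀ ℓ (θseq k) (lam k) (α k - δ) : ℝ) : EReal)
          ≤ augG ℓ₀ ℓ (lam k) (α k) + ((ε k : ℝ) : EReal)
              - augG ℓ₀ ℓ (lam k) (α k - δ) := by
  have hαδ : ∀ k, 0 < α k - δ := fun k => sub_pos.2 (hα k)
  -- first (real) key inequality
  have hkey : ∀ k, δ * ∑ i, (max 0 (ℓ i (θseq k))) ^ 2
      ≤ augL ℓ₀ ℓ (θseq k) (lam k) (α k) - augL ℓ₀ ℓ (θseq k) (lam k) (α k - δ) := by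
    intro k
    have hsum : ∑ i, δ * (max 0 (ℓ i (θseq k)))^2
        ≤ ∑ i, ((α k) * Psi (ℓ i (θseq k)) (lam k i / α k)
              - (α k - δ) * Psi (ℓ i (θseq k)) (lam k i / (α k - δ))) := by
      apply Finset.sum_le_sum
      intro i _
      have h := psi_key (ℓ i (θseq k)) (lam k i) (hlam k i) (hαδ k)
          (by linarith [hα k] : α k - δ ≤ α k)
      have e : α k - (α k - δ) = δ := by ring
      rwa [e] at h
    rw [Finset.sum_sub_distrib, ← Finset.mul_sum, ← Finset.mul_sum, ← Finset.mul_sum] at hsum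
    unfold augL
    linarith [hsum]
  -- basic facts about the dual values
  have hAle : ∀ k, augG ℓ₀ ℓ (lam k) (α k)
      ≤ ((augL ℓ₀ ℓ (θseq k) (lam k) (α k) : ℝ) : EReal) := fun k => iInf_le _ _
  have hBle : ∀ k, augG ℓ₀ ℓ (lam k) (α k - δ)
      ≤ ((augL ℓ₀ ℓ (θseq k) (lam k) (α k - δ) : ℝ) : EReal) := fun k => iInf_le _ _
  have hAnb : ∀ k, augG ℓ₀ ℓ (lam k) (α k) ≠ ⊥ := by
    intro k h
    have h2 := happrox k
    rw [h, EReal.bot_add] at h2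
    exact EReal.coe_ne_bot _ (le_bot_iff.1 h2)
  have hAnt : ∀ k, augG ℓ₀ ℓ (lam k) (α k) ≠ ⊤ :=
    fun k => ((hAle k).trans_lt (EReal.coe_lt_top _)).ne
  have hBnt : ∀ k, augG ℓ₀ ℓ (lam k) (α k - δ) ≠ ⊤ :=
    fun k => ((hBle k).trans_lt (EReal.coe_lt_top _)).ne
  -- second (EReal) key inequality
  have hkey2 : ∀ k, ((augL ℓ₀ ℓ (θseq k) (lam k) (α k)
        - augL ℓ₀ ℓ (θseq k) (lam k) (α k - δ) : ℝ) : EReal)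
      ≤ augG ℓ₀ ℓ (lam k) (α k) + ((ε k : ℝ) : EReal)
        - augG ℓ₀ ℓ (lam k) (α k - δ) := by
    intro k
    obtain ⟨a, ha⟩ : ∃ a : ℝ, augG ℓ₀ ℓ (lam k) (α k) = (a : EReal) :=
      ⟨_, (EReal.coe_toReal (hAnt k) (hAnb k)).symm⟩
    rcases eq_or_ne (augG ℓ₀ ℓ (lam k) (α k - δ)) ⊥ with hb | hb
    · rw [hb, EReal.sub_bot (by
        rw [ha, ← EReal.coe_add]; exact EReal.coe_ne_bot _)]
      exact le_top
    · obtain ⟨b, hbe⟩ : ∃ b : ℝ, augG ℓ₀ ℓ (lam k) (α k - δ) = (b : EReal) :=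
        ⟨_, (EReal.coe_toReal (hBnt k) hb).symm⟩
      have h1 : augL ℓ₀ ℓ (θseq k) (lam k) (α k) ≤ a + ε k := by
        have := happrox k
        rw [ha, ← EReal.coe_add] at this
        exact_mod_cast this
      have h2 : b ≤ augL ℓ₀ ℓ (θseq k) (lam k) (α k - δ) := by
        have := hBle k
        rw [hbe] at this
        exact_mod_cast this
      rw [ha, hbe, ← EReal.coe_add, ← EReal.coe_sub]
      exact_mod_cast (by linarith : augL ℓ₀ ℓ (θseq k) (lam k) (α k)
        - augL ℓ₀ ℓ (θseq k) (lam k) (α k - δ) ≤ a + ε k - b)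
  refine ⟨?_, fun k => ⟨hkey k, hkey2 k⟩⟩
  -- supD is a real number
  have hAleD : ∀ k, augG ℓ₀ ℓ (lam k) (α k) ≤ supD := by
    intro k
    rw [hsupD]
    exact le_iSup_of_le (lam k) (le_iSup_of_le (α k) (le_iSup_of_le (hδ.trans (hα k)) le_rfl))
  have hsupD_nb : supD ≠ ⊥ := fun h => hAnb 0 (le_bot_iff.1 (h ▸ hAleD 0))
  obtain ⟨r, hr⟩ : ∃ r : ℝ, supD = (r : EReal) :=
    ⟨_, (EReal.coe_toReal hsupD_fin hsupD_nb).symm⟩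
  rw [hr] at htend
  -- toReal of the B sequence tends to r
  have hbtend : Tendsto (fun k => (augG ℓ₀ ℓ (lam k) (α k - δ)).toReal) atTop (nhds r) := by
    have h2 := (EReal.tendsto_toReal (a := ((r:ℝ):EReal))
      (EReal.coe_ne_top r) (EReal.coe_ne_bot r)).comp htend
    simpa [Function.comp_def] using h2
  -- eventually B is not ⊥
  have hBev : ∀ᶠ k in atTop, augG ℓ₀ ℓ (lam k) (α k - δ) ≠ ⊥ := by
    have hlt : ((r - 1 : ℝ) : EReal) < ((r : ℝ) : EReal) := by
      exact_mod_cast (by linarith : r - 1 < r)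
    filter_upwards [htend.eventually (eventually_gt_nhds hlt)] with k hk h
    rw [h] at hk
    exact (not_lt_bot hk)
  -- the upper bound sequence tends to 0
  have hupper : Tendsto (fun k => (r + ε k - (augG ℓ₀ ℓ (lam k) (α k - δ)).toReal)/δ)
      atTop (nhds 0) := by
    have h1 : Tendsto (fun k => r + ε k - (augG ℓ₀ ℓ (lam k) (α k - δ)).toReal)
        atTop (nhds (r + 0 - r)) := (tendsto_const_nhds.add hεlim).sub hbtend
    have h2 := h1.div_const δ
    simpa using h2
  intro i
  -- squeeze for the squares
  have hevle : ∀ᶠ k in atTop, (max 0 (ℓ i (θseq k)))^2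
      ≤ (r + ε k - (augG ℓ₀ ℓ (lam k) (α k - δ)).toReal)/δ := by
    filter_upwards [hBev] with k hk
    set b := (augG ℓ₀ ℓ (lam k) (α k - δ)).toReal with hbdef
    have hbe : augG ℓ₀ ℓ (lam k) (α k - δ) = (b : EReal) :=
      (EReal.coe_toReal (hBnt k) hk).symm
    obtain ⟨a, ha⟩ : ∃ a : ℝ, augG ℓ₀ ℓ (lam k) (α k) = (a : EReal) :=
      ⟨_, (EReal.coe_toReal (hAnt k) (hAnb k)).symm⟩
    have har : a ≤ r := by
      have := hAleD k
      rw [ha, hr] at this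
      exact_mod_cast this
    -- real version of hkey2
    have hreal : augL ℓ₀ ℓ (θseq k) (lam k) (α k)
        - augL ℓ₀ ℓ (θseq k) (lam k) (α k - δ) ≤ a + ε k - b := by
      have := hkey2 k
      rw [ha, hbe, ← EReal.coe_add, ← EReal.coe_sub] at this
      exact_mod_cast this
    have hsum_le : δ * ∑ j, (max 0 (ℓ j (θseq k)))^2 ≤ r + ε k - b := by
      have := hkey k
      linarith
    have hone : (max 0 (ℓ i (θseq k)))^2 ≤ ∑ j, (max 0 (ℓ j (θseq k)))^2 :=
      Finset.single_le_sum (f := fun j => (max 0 (ℓ j (θseq k)))^2)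
        (fun j _ => by positivity) (Finset.mem_univ i)
    rw [le_div_iff₀ hδ]
    nlinarith [hone, hsum_le]
  have hsq : Tendsto (fun k => (max 0 (ℓ i (θseq k)))^2) atTop (nhds 0) :=
    tendsto_of_tendsto_of_tendsto_of_le_of_le' tendsto_const_nhds hupper
      (Eventually.of_forall fun k => by positivity) hevle
  have hmax : Tendsto (fun k => max 0 (ℓ i (θseq k))) atTop (nhds 0) := by
    have h2 := hsq.sqrt
    simp only [Real.sqrt_zero] at h2
    have h3 : (fun k => Real.sqrt ((max 0 (ℓ i (θseq k)))^2))
        = fun k => max 0 (ℓ i (θseq k)) := by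
      funext k; exact Real.sqrt_sq (le_max_left 0 _)
    rwa [h3] at h2
  exact hmax.limsup_eq
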